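/- Let A be an integer m×n matrix with rows a^{(1)},...,a^{(m)}, m' < m, β ∈ ℤ^{m'}, and let S_{A,β} = { b[m'+1] : b ∈ A·{0,1}^n, b[i] = β[i] for i = 1,...,m' }. Then for any subset 𝕏 ⊆ ℝ, |S_{A,β}| ≤ ⌈ dist_{1,𝕏}(a^{(m'+1)}; (a^{(1)},...,a^{(m')})) ⌉ + 1, where dist_{1,𝕏}(a; (v₁,...,v_k)) = min over λ₁,...,λ_k ∈ 𝕏 of ‖a − Σ λ_i v_i‖₁. -/

import Mathlib

open Matrix

/-- Bound on the number of values that coordinate `m'` (0-indexed) of `A·x` can take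
over `x ∈ {0,1}^n` once the first `m'` coordinates are fixed to `β`: it is at most
`⌈‖a^{(m'+1)} − Σ λᵢ a^{(i)}‖₁⌉ + 1` for any coefficients `λᵢ ∈ 𝕏` (in particular
for minimizing ones). -/
theorem stmt15 {m n : ℕ} (A : Matrix (Fin m) (Fin n) ℤ) (m' : ℕ) (hm' : m' < m)
    (β : Fin m → ℤ) (𝕏 : Set ℝ) (lam : Fin m → ℝ)
    (hlam : ∀ i : Fin m, (i : ℕ) < m' → lam i ∈ 𝕏) :
    ({c : ℤ | ∃ x : Fin n → ℤ, (∀ i, x i = 0 ∨ x i = 1) ∧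
        (∀ i : Fin m, (i : ℕ) < m' → A.mulVec x i = β i) ∧
        A.mulVec x ⟨m', hm'⟩ = c}.ncard : ℝ) ≤
      (⌈∑ k : Fin n, |(A ⟨m', hm'⟩ k : ℝ) -
          ∑ i ∈ Finset.univ.filter (fun i : Fin m => (i : ℕ) < m'),
            lam i * (A i k : ℝ)|⌉ : ℤ) + 1 := by
  classical
  set F := Finset.univ.filter (fun i : Fin m => (i : ℕ) < m') with hF
  set r : Fin n → ℝ := fun k => (A ⟨m', hm'⟩ k : ℝ) - ∑ i ∈ F, lam i * (A i k : ℝ) with hr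
  set D : ℝ := ∑ k : Fin n, |r k| with hD
  set S := {c : ℤ | ∃ x : Fin n → ℤ, (∀ i, x i = 0 ∨ x i = 1) ∧
        (∀ i : Fin m, (i : ℕ) < m' → A.mulVec x i = β i) ∧
        A.mulVec x ⟨m', hm'⟩ = c} with hS
  have hDnn : 0 ≤ D := Finset.sum_nonneg fun k _ => abs_nonneg _
  set L : ℝ := ∑ i ∈ F, lam i * (β i : ℝ) with hL
  -- value representation
  have val : ∀ c ∈ S, ∃ x : Fin n → ℤ, (∀ i, x i = 0 ∨ x i = 1) ∧
      (c : ℝ) = (∑ k : Fin n, r k * (x k : ℝ)) + L := by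
    intro c hc
    obtain ⟨x, hx01, hxβ, hxc⟩ := hc
    refine ⟨x, hx01, ?_⟩
    have hcast : ∀ j : Fin m, ((A.mulVec x j : ℤ) : ℝ) = ∑ k : Fin n, (A j k : ℝ) * (x k : ℝ) := by
      intro j
      simp [Matrix.mulVec, dotProduct]
    have h1 : (c : ℝ) = ∑ k : Fin n, (A ⟨m', hm'⟩ k : ℝ) * (x k : ℝ) := by
      rw [← hxc]; exact hcast _
    have h2 : ∀ i ∈ F, ∑ k : Fin n, (A i k : ℝ) * (x k : ℝ) = (β i : ℝ) := by
      intro i hi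
      rw [hF, Finset.mem_filter] at hi
      rw [← hcast i, hxβ i hi.2]
    rw [h1, hr, hL]
    simp only [sub_mul, Finset.sum_sub_distrib, Finset.sum_mul]
    rw [Finset.sum_comm]
    have : ∀ i ∈ F, ∑ k : Fin n, lam i * (A i k : ℝ) * (x k : ℝ) = lam i * (β i : ℝ) := by
      intro i hi
      rw [← h2 i hi, Finset.mul_sum]
      exact Finset.sum_congr rfl fun k _ => by ring
    rw [Finset.sum_congr rfl this]
    ring
  -- difference bound
  have diff : ∀ c ∈ S, ∀ c' ∈ S, ((c - c' : ℤ) : ℝ) ≤ D := by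
    intro c hc c' hc'
    obtain ⟨x, hx01, hx⟩ := val c hc
    obtain ⟨y, hy01, hy⟩ := val c' hc'
    have : ((c - c' : ℤ) : ℝ) = ∑ k : Fin n, r k * ((x k : ℝ) - (y k : ℝ)) := by
      push_cast
      rw [hx, hy]
      simp [mul_sub, Finset.sum_sub_distrib]
    rw [this, hD]
    refine Finset.sum_le_sum fun k _ => ?_
    have hb : |(x k : ℝ) - (y k : ℝ)| ≤ 1 := by
      rcases hx01 k with h | h <;> rcases hy01 k with h' | h' <;>
        rw [h, h'] <;> norm_num
    calc r k * ((x k : ℝ) - (y k : ℝ)) ≤ |r k * ((x k : ℝ) - (y k : ℝ))| := le_abs_self _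
      _ = |r k| * |(x k : ℝ) - (y k : ℝ)| := abs_mul _ _
      _ ≤ |r k| * 1 := by gcongr
      _ = |r k| := mul_one _
  have diffZ : ∀ c ∈ S, ∀ c' ∈ S, c - c' ≤ ⌈D⌉ := by
    intro c hc c' hc'
    have := (diff c hc c' hc').trans (Int.le_ceil D)
    exact_mod_cast this
  -- main counting
  rcases Set.eq_empty_or_nonempty S with hSe | ⟨c₀, hc₀⟩
  · rw [hSe]
    simp
    positivity
  · have hfin : S.Finite := by
      apply Set.Finite.subset (Set.finite_Icc (c₀ - ⌈D⌉) (c₀ + ⌈D⌉))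
      intro c hc
      constructor
      · linarith [diffZ c₀ hc₀ c hc]
      · linarith [diffZ c hc c₀ hc₀]
    obtain ⟨cm, hcm, hcmin⟩ := Set.Finite.exists_minimalFor id S hfin ⟨c₀, hc₀⟩
    have hsub : S ⊆ Set.Icc cm (cm + ⌈D⌉) := by
      intro c hc
      constructor
      · by_contra h
        push_neg at h
        have := hcmin hc (le_of_lt h)
        simp only [id] at this
        omega
      · linarith [diffZ c hc cm hcm]
    have hcard : S.ncard ≤ (Set.Icc cm (cm + ⌈D⌉)).ncard :=
      Set.ncard_le_ncard hsub (Set.finite_Icc _ _)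
    have hicc : (Set.Icc cm (cm + ⌈D⌉)).ncard = (⌈D⌉ + 1).toNat := by
      rw [← Finset.coe_Icc, Set.ncard_coe_finset, Int.card_Icc]
      congr 1
      ring
    have hceil : (0:ℤ) ≤ ⌈D⌉ := Int.ceil_nonneg hDnn
    have : (S.ncard : ℝ) ≤ ((⌈D⌉ + 1).toNat : ℝ) := by exact_mod_cast hicc ▸ hcard
    calc (S.ncard : ℝ) ≤ ((⌈D⌉ + 1).toNat : ℝ) := this
      _ = (⌈D⌉ : ℝ) + 1 := by
          have h' : ((⌈D⌉ + 1).toNat : ℤ) = ⌈D⌉ + 1 := Int.toNat_of_nonneg (by omega)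
          exact_mod_cast h'
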